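/- For every integer n ≥ 0, the Genocchi number G_n = 2·(1 - 2^n)·B_n(1) is an integer, where B_n(1) is the n-th Bernoulli number with B_1(1) = 1/2. -/

import Mathlib

open Polynomial Finset

/-- value of Bernoulli polynomial -/
noncomputable def Bv (n : ℕ) (x : ℚ) : ℚ := (Polynomial.bernoulli n).eval x

lemma bernoulli_comp_add (n : ℕ) (t : ℚ) :
    (Polynomial.bernoulli n).comp (X + C t) =
      ∑ k ∈ range (n + 1), C ((n.choose k : ℚ) * Bv k t) * X ^ (n - k) := by
  induction n with
  | zero => simp [Bv]
  | succ n ih =>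
    set L := (Polynomial.bernoulli (n+1)).comp (X + C t) with hL
    set R := ∑ k ∈ range (n + 2), C (((n+1).choose k : ℚ) * Bv k t) * X ^ (n + 1 - k) with hR
    have hder : derivative (L - R) = 0 := by
      have h1 : derivative L = ((n : ℚ) + 1) •
          ((Polynomial.bernoulli n).comp (X + C t)) := by
        rw [hL, derivative_comp, derivative_bernoulli_add_one]
        simp [mul_comm, smul_eq_C_mul, mul_comp]
      have h2 : derivative R = ((n : ℚ) + 1) •
          (∑ k ∈ range (n + 1), C ((n.choose k : ℚ) * Bv k t) * X ^ (n - k)) := by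
        rw [hR, derivative_sum]
        rw [Finset.smul_sum]
        rw [Finset.sum_range_succ_comm]
        have htop : derivative (C (((n+1).choose (n+1) : ℚ) * Bv (n+1) t) * X ^ (n + 1 - (n+1))) = 0 := by
          simp
        rw [htop, zero_add]
        apply Finset.sum_congr rfl
        intro k hk
        rw [mem_range] at hk
        have hkn : k ≤ n := Nat.lt_succ_iff.mp hk
        have hc : ((n + 1 - k : ℕ) : ℚ) * ((n+1).choose k : ℚ) = ((n:ℚ)+1) * (n.choose k : ℚ) := by
          have h3 := Nat.choose_succ_right_eq (n+1) k
          have h4 := Nat.add_one_mul_choose_eq n k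
          have key : (n + 1 - k) * ((n+1).choose k) = (n+1) * (n.choose k) := by
            calc (n+1-k) * ((n+1).choose k) = (n+1).choose k * (n+1-k) := Nat.mul_comm _ _
              _ = (n+1).choose (k+1) * (k+1) := h3.symm
              _ = (n+1) * n.choose k := h4.symm
          exact_mod_cast congrArg (fun m : ℕ => (m : ℚ)) key
        have hsub : n + 1 - k - 1 = n - k := by omega
        rw [derivative_C_mul, derivative_X_pow, hsub, smul_eq_C_mul, ← mul_assoc, ← C_mul,
          ← mul_assoc, ← C_mul]
        congr 2
        push_cast
        push_cast at hc
        ring_nf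
        ring_nf at hc
        linear_combination (Bv k t) * hc
      rw [derivative_sub, h1, h2, ih]
      rw [sub_self]
    have hconst := Polynomial.eq_C_of_derivative_eq_zero hder
    have hev : (L - R).eval 0 = 0 := by
      rw [eval_sub, hL, hR, eval_comp]
      simp only [eval_add, eval_X, eval_C, zero_add]
      rw [eval_finset_sum]
      rw [Finset.sum_range_succ]
      simp only [eval_mul, eval_C, eval_pow, eval_X]
      rw [Finset.sum_eq_zero, Nat.sub_self]
      · simp [Bv]
      · intro k hk
        rw [mem_range] at hk
        have : n + 1 - k ≠ 0 := by omega
        simp [zero_pow this]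
    have : (L - R).coeff 0 = (L - R).eval 0 := by
      rw [← Polynomial.coeff_zero_eq_eval_zero]
    rw [this, hev, map_zero] at hconst
    have := sub_eq_zero.mp hconst
    exact this

lemma Bv_add (n : ℕ) (x t : ℚ) :
    Bv n (x + t) = ∑ k ∈ range (n + 1), (n.choose k : ℚ) * Bv k t * x ^ (n - k) := by
  have h := congrArg (Polynomial.eval x) (bernoulli_comp_add n t)
  rw [eval_comp] at h
  simp only [eval_add, eval_X, eval_C, eval_finset_sum, eval_mul, eval_pow] at h
  exact h

lemma sum_Bv (n : ℕ) (x : ℚ) :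
    ∑ k ∈ range (n + 1), ((n + 1).choose k : ℚ) * Bv k x = ((n : ℚ) + 1) * x ^ n := by
  have h := congrArg (Polynomial.eval x) (Polynomial.sum_bernoulli n)
  rw [eval_finset_sum, eval_monomial] at h
  simpa [Bv, smul_eq_mul, mul_comm] using h

lemma Bv_shift (n : ℕ) (x : ℚ) : Bv n (x + 1) = Bv n x + n * x ^ (n - 1) := by
  rw [Bv, add_comm, Polynomial.bernoulli_eval_one_add]; rfl

lemma Bv_zero_eval (n : ℕ) : Bv n 0 = _root_.bernoulli n := Polynomial.bernoulli_eval_zero n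

lemma Bv_one_eval (n : ℕ) : Bv n 1 = bernoulli' n := Polynomial.bernoulli_eval_one n

lemma Bv_zero_poly (x : ℚ) : Bv 0 x = 1 := by simp [Bv]

lemma sum_two_pow (n : ℕ) :
    ∑ k ∈ range (n + 1), ((n + 1).choose k : ℚ) * Bv k 0 * 2 ^ (n + 1 - k)
      = Bv (n + 1) 2 - Bv (n + 1) 0 := by
  have h := Bv_add (n + 1) 2 0
  rw [Finset.sum_range_succ] at h
  simp only [Nat.choose_self, Nat.sub_self, pow_zero, Nat.cast_one, one_mul, mul_one] at h
  have h2 : (2 : ℚ) + 0 = 2 := by norm_num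
  rw [h2] at h
  linarith [h]

lemma Bv_two (n : ℕ) (hn : 2 ≤ n) : Bv n 2 = Bv n 0 + n := by
  have h1 : Bv n ((1 : ℚ) + 1) = Bv n 1 + n * 1 ^ (n - 1) := Bv_shift n 1
  have h0 : Bv n ((0 : ℚ) + 1) = Bv n 0 + n * 0 ^ (n - 1) := Bv_shift n 0
  have hz : (0 : ℚ) ^ (n - 1) = 0 := zero_pow (by omega)
  rw [show (2:ℚ) = 1 + 1 by norm_num, h1]
  rw [show (1:ℚ) = 0 + 1 by norm_num, h0, hz]
  ring

lemma Bv_half (n : ℕ) : 2 ^ n * Bv n (1/2 : ℚ) = (2 - 2 ^ n) * Bv n 0 := by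
  induction n using Nat.strong_induction_on with
  | _ n ih =>
    rcases Nat.eq_zero_or_pos n with rfl | hn
    · simp [Bv_zero_poly, Bv]; norm_num
    · -- n ≥ 1
      obtain ⟨m, rfl⟩ : ∃ m, n = m + 1 := ⟨n - 1, by omega⟩
      set N := m + 1 with hN
      have key : ∑ k ∈ range (N + 1), ((N + 1).choose k : ℚ) * 2 ^ (N - k) *
          (2 ^ k * Bv k (1/2 : ℚ) - (2 - 2 ^ k) * Bv k 0) = 0 := by
        have e1 : ∑ k ∈ range (N + 1), ((N + 1).choose k : ℚ) * 2 ^ (N - k) *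
            (2 ^ k * Bv k (1/2 : ℚ)) = (N : ℚ) + 1 := by
          have : ∀ k ∈ range (N + 1), ((N + 1).choose k : ℚ) * 2 ^ (N - k) *
              (2 ^ k * Bv k (1/2 : ℚ)) = 2 ^ N * (((N + 1).choose k : ℚ) * Bv k (1/2 : ℚ)) := by
            intro k hk
            rw [mem_range] at hk
            have hkN : k ≤ N := by omega
            have : (2:ℚ) ^ (N - k) * 2 ^ k = 2 ^ N := by
              rw [← pow_add, Nat.sub_add_cancel hkN]
            linear_combination (((N + 1).choose k : ℚ) * Bv k (1/2:ℚ)) * this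
          rw [Finset.sum_congr rfl this, ← Finset.mul_sum, sum_Bv]
          rw [show ((1:ℚ)/2) ^ N = 1 / 2 ^ N by rw [div_pow]; norm_num]
          field_simp
        have e2 : ∑ k ∈ range (N + 1), ((N + 1).choose k : ℚ) * 2 ^ (N - k) *
            ((2 - 2 ^ k) * Bv k 0) = (N : ℚ) + 1 := by
          have split : ∀ k ∈ range (N + 1), ((N + 1).choose k : ℚ) * 2 ^ (N - k) *
              ((2 - 2 ^ k) * Bv k 0)
              = ((N + 1).choose k : ℚ) * Bv k 0 * 2 ^ (N + 1 - k)
                - 2 ^ N * (((N + 1).choose k : ℚ) * Bv k 0) := by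
            intro k hk
            rw [mem_range] at hk
            have hkN : k ≤ N := by omega
            have hp : (2:ℚ) ^ (N - k) * 2 ^ k = 2 ^ N := by
              rw [← pow_add, Nat.sub_add_cancel hkN]
            have hp2 : (2:ℚ) ^ (N + 1 - k) = 2 * 2 ^ (N - k) := by
              rw [show N + 1 - k = (N - k) + 1 by omega, pow_succ]; ring
            rw [hp2]
            linear_combination (-(((N + 1).choose k : ℚ) * Bv k 0)) * hp
          rw [Finset.sum_congr rfl split, Finset.sum_sub_distrib, sum_two_pow, ← Finset.mul_sum,
            sum_Bv]
          have hz : (0:ℚ) ^ N = 0 := zero_pow (by omega)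
          rw [hz, Bv_two (N + 1) (by omega)]
          push_cast
          ring
        calc ∑ k ∈ range (N + 1), ((N + 1).choose k : ℚ) * 2 ^ (N - k) *
            (2 ^ k * Bv k (1/2 : ℚ) - (2 - 2 ^ k) * Bv k 0)
            = (∑ k ∈ range (N + 1), ((N + 1).choose k : ℚ) * 2 ^ (N - k) *
                (2 ^ k * Bv k (1/2 : ℚ)))
              - ∑ k ∈ range (N + 1), ((N + 1).choose k : ℚ) * 2 ^ (N - k) *
                ((2 - 2 ^ k) * Bv k 0) := by
              rw [← Finset.sum_sub_distrib]; apply Finset.sum_congr rfl; intros; ring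
          _ = 0 := by rw [e1, e2]; ring
      rw [Finset.sum_range_succ] at key
      have hzero : ∀ k ∈ range N, ((N + 1).choose k : ℚ) * 2 ^ (N - k) *
          (2 ^ k * Bv k (1/2 : ℚ) - (2 - 2 ^ k) * Bv k 0) = 0 := by
        intro k hk
        rw [mem_range] at hk
        rw [ih k hk]
        ring
      rw [Finset.sum_eq_zero hzero, zero_add, Nat.choose_succ_self_right] at key
      have hfac : ((N:ℚ) + 1) * 2 ^ (N - N) * (2 ^ N * Bv N (1/2:ℚ) - (2 - 2 ^ N) * Bv N 0) = 0 := by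
        calc ((N:ℚ) + 1) * 2 ^ (N - N) * (2 ^ N * Bv N (1/2:ℚ) - (2 - 2 ^ N) * Bv N 0)
            = (↑(N + 1) : ℚ) * 2 ^ (N - N) * (2 ^ N * Bv N (1/2:ℚ) - (2 - 2 ^ N) * Bv N 0) := by
              push_cast; ring
          _ = 0 := key
      have hNne : ((N:ℚ) + 1) * 2 ^ (N - N) ≠ 0 := by positivity
      rcases mul_eq_zero.mp hfac with h | h
      · exact absurd h hNne
      · linarith [h]

lemma Bv_dup (n : ℕ) (x : ℚ) :
    2 ^ n * (Bv n x + Bv n (x + 1/2)) = 2 * Bv n (2 * x) := by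
  have h0 : Bv n x = ∑ k ∈ range (n + 1), (n.choose k : ℚ) * Bv k 0 * x ^ (n - k) := by
    have := Bv_add n x 0
    rwa [add_zero] at this
  have hh : Bv n (x + 1/2) = ∑ k ∈ range (n + 1), (n.choose k : ℚ) * Bv k (1/2 : ℚ) * x ^ (n - k) :=
    Bv_add n x (1/2)
  have h2 : Bv n (2 * x) = ∑ k ∈ range (n + 1), (n.choose k : ℚ) * Bv k 0 * (2*x) ^ (n - k) := by
    have := Bv_add n (2*x) 0
    rwa [add_zero] at this
  rw [h0, hh, h2, ← Finset.sum_add_distrib, Finset.mul_sum, Finset.mul_sum]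
  apply Finset.sum_congr rfl
  intro k hk
  rw [mem_range] at hk
  have hkn : k ≤ n := by omega
  have hp : (2:ℚ) ^ (n - k) * 2 ^ k = 2 ^ n := by rw [← pow_add, Nat.sub_add_cancel hkn]
  have hBk := Bv_half k
  rw [mul_pow]
  linear_combination (-((n.choose k:ℚ) * Bv k 0 * x^(n-k) + (n.choose k:ℚ) * Bv k (1/2:ℚ) * x^(n-k))) * hp
    + ((n.choose k:ℚ) * x^(n-k) * 2^(n-k)) * hBk

/-- Genocchi numbers (rational form) -/
noncomputable def gg (k : ℕ) : ℚ := 2 * (1 - 2^k) * Bv k 1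

noncomputable def F (n : ℕ) (y : ℚ) : ℚ := ∑ k ∈ range (n+1), (n.choose k : ℚ) * gg k * y^(n-k)

lemma F_eq (n : ℕ) (y : ℚ) : F n y = 2 * Bv n (y + 1) - 2^(n+1) * Bv n (y/2 + 1) := by
  have h1 : Bv n (y + 1) = ∑ k ∈ range (n + 1), (n.choose k : ℚ) * Bv k 1 * y ^ (n - k) :=
    Bv_add n y 1
  have h2 : Bv n (y/2 + 1) = ∑ k ∈ range (n + 1), (n.choose k : ℚ) * Bv k 1 * (y/2) ^ (n - k) :=
    Bv_add n (y/2) 1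
  rw [F, h1, h2, Finset.mul_sum, Finset.mul_sum, ← Finset.sum_sub_distrib]
  apply Finset.sum_congr rfl
  intro k hk
  rw [mem_range] at hk
  have hkn : k ≤ n := by omega
  have hpow : (2:ℚ)^(k+1) * 2^(n-k) = 2^(n+1) := by rw [← pow_add]; congr 1; omega
  have h2p : (2:ℚ)^(n+1) * (y/2)^(n-k) = 2^(k+1) * y^(n-k) := by
    rw [div_pow, ← hpow]
    have : (2:ℚ)^(n-k) ≠ 0 := by positivity
    field_simp
  rw [gg]
  linear_combination ((n.choose k:ℚ) * Bv k 1) * h2p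

lemma key_id (n : ℕ) (y : ℚ) :
    F n (y + 1) + F n y = 2 * Bv n (y+1) - 2 * Bv n (y+2) := by
  have e1 : F n (y+1) = 2 * Bv n (y+2) - 2^(n+1) * Bv n ((y+1)/2 + 1) := by
    have := F_eq n (y+1)
    rwa [show (y+1)+1 = y+2 by ring] at this
  have e0 : F n y = 2 * Bv n (y+1) - 2^(n+1) * Bv n (y/2+1) := F_eq n y
  have dup := Bv_dup n (y/2 + 1)
  rw [show y/2 + 1 + 1/2 = (y+1)/2 + 1 by ring, show 2*(y/2+1) = y + 2 by ring] at dup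
  have hps : (2:ℚ)^(n+1) = 2 * 2^n := by rw [pow_succ]; ring
  linear_combination e1 + e0 - 2 * dup
    - (Bv n (y/2+1) + Bv n ((y+1)/2+1)) * hps

lemma key (n : ℕ) (hn : 1 ≤ n) (y : ℚ) :
    F n (y + 1) + F n y = -(2 * n * (y+1)^(n-1)) := by
  rw [key_id n y]
  have shift : Bv n (y+2) = Bv n (y+1) + n * (y+1)^(n-1) := by
    have := Bv_shift n (y+1)
    rwa [show (y+1)+1 = y+2 by ring] at this
  rw [shift]; ring

lemma F_zero (n : ℕ) : F n 0 = gg n := by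
  rw [F, Finset.sum_range_succ]
  rw [Finset.sum_eq_zero, Nat.choose_self, Nat.sub_self]
  · simp
  · intro k hk
    rw [mem_range] at hk
    have : n - k ≠ 0 := by omega
    simp [zero_pow this]

lemma F_one (n : ℕ) : F n 1 = ∑ k ∈ range (n+1), (n.choose k : ℚ) * gg k := by
  rw [F]; apply Finset.sum_congr rfl; intros; simp

lemma I1 (n : ℕ) (hn : 1 ≤ n) :
    (∑ k ∈ range (n+1), (n.choose k : ℚ) * gg k) + gg n = -(2*n) := by
  have h := key n hn 0
  rw [zero_add, F_zero, F_one] at h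
  simpa using h

lemma I3 (n : ℕ) (hn : 1 ≤ n) :
    (∑ k ∈ range (n+1), (n.choose k : ℚ) * gg k * 3^(n-k)) + gg n
      = -(2*n*(3^(n-1) - 2^(n-1) + 1)) := by
  have k2 := key n hn 2
  have k1 := key n hn 1
  have k0 := key n hn 0
  rw [zero_add, F_zero] at k0
  norm_num at k2 k1 k0
  have hF3 : F n 3 = ∑ k ∈ range (n+1), (n.choose k : ℚ) * gg k * 3^(n-k) := by
    rw [F]
  have hF1 : F n 1 = ∑ k ∈ range (n+1), (n.choose k : ℚ) * gg k := F_one n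
  rw [hF1] at k0
  linarith [k2, k1, k0, hF3.symm.le, hF3.le]

lemma gg_zero : gg 0 = 0 := by simp [gg]

lemma gg_one : gg 1 = -1 := by
  rw [gg, Bv_one_eval, bernoulli'_one]; norm_num

lemma gg_odd {n : ℕ} (h : Odd n) (h1 : 1 < n) : gg n = 0 := by
  rw [gg, Bv_one_eval, bernoulli'_eq_zero_of_odd h h1]; ring

lemma choose_mul_sub (n k : ℕ) (hk : k ≤ n) :
    (n + 1 - k) * ((n+1).choose k) = (n+1) * (n.choose k) := by
  have h3 := Nat.choose_succ_right_eq (n+1) k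
  have h4 := Nat.add_one_mul_choose_eq n k
  calc (n+1-k) * ((n+1).choose k) = (n+1).choose k * (n+1-k) := Nat.mul_comm _ _
    _ = (n+1).choose (k+1) * (k+1) := h3.symm
    _ = (n+1) * n.choose k := h4.symm

lemma sum_kchoose (m : ℕ) :
    ∑ k ∈ range (m+2), k * (m+1).choose k = (m+1) * 2^m := by
  rw [Finset.sum_range_succ']
  simp only [zero_mul, add_zero]
  have he : ∀ i ∈ range (m+1), (i+1) * (m+1).choose (i+1) = (m+1) * m.choose i := by
    intro i _
    have h4 := Nat.add_one_mul_choose_eq m i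
    rw [mul_comm]
    exact h4.symm
  rw [Finset.sum_congr rfl he, ← Finset.mul_sum, Nat.sum_range_choose]

lemma zmod_odd {z : ℤ} (h : Odd z) : (z : ZMod 2) = 1 := by
  have h2 : (z : ZMod 2) ≠ 0 := by
    rw [Ne, ZMod.intCast_zmod_eq_zero_iff_dvd]
    rw [← Int.not_even_iff_odd] at h
    exact fun hd => h (even_iff_two_dvd.mpr (by exact_mod_cast hd))
  have : ∀ a : ZMod 2, a = 0 ∨ a = 1 := by decide
  rcases this (z : ZMod 2) with h0 | h1
  · exact absurd h0 h2
  · exact h1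

lemma zmod_even {z : ℤ} (h : Even z) : (z : ZMod 2) = 0 := by
  rw [ZMod.intCast_zmod_eq_zero_iff_dvd]
  exact_mod_cast even_iff_two_dvd.mp h

lemma even_of_zmod {z : ℤ} (h : (z : ZMod 2) = 0) : Even z := by
  rw [ZMod.intCast_zmod_eq_zero_iff_dvd] at h
  exact even_iff_two_dvd.mpr (by exact_mod_cast h)

lemma odd_of_zmod {z : ℤ} (h : (z : ZMod 2) = 1) : Odd z := by
  rcases Int.even_or_odd z with he | ho
  · rw [zmod_even he] at h; exact absurd h (by decide)
  · exact ho

lemma natcast_zmod_even {k : ℕ} (h : Even k) : (k : ZMod 2) = 0 := by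
  rw [ZMod.natCast_eq_zero_iff]
  exact even_iff_two_dvd.mp h

lemma natcast_zmod_odd {k : ℕ} (h : Odd k) : (k : ZMod 2) = 1 := by
  obtain ⟨m, rfl⟩ := h
  push_cast
  rw [show ((2:ZMod 2)) = 0 by decide]
  ring

lemma hgeoQ (p : ℕ) : (3:ℚ)^p - 1 = 2 * ∑ i ∈ range p, (3:ℚ)^i := by
  have := geom_sum_mul (3:ℚ) p
  linarith [this]

theorem gg_int (n : ℕ) :
    ∃ z : ℤ, (z:ℚ) = gg n ∧ (Odd z ↔ (n = 1 ∨ (Even n ∧ 2 ≤ n))) := by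
  induction n using Nat.strong_induction_on with
  | _ n ih =>
  rcases Nat.lt_or_ge n 2 with hn2 | hn2
  · interval_cases n
    · refine ⟨0, by rw [gg_zero]; norm_num, ?_⟩
      constructor
      · intro h; exact absurd h (by decide)
      · rintro (h | ⟨_, h⟩) <;> omega
    · refine ⟨-1, by rw [gg_one]; norm_num, ?_⟩
      constructor
      · intro _; left; rfl
      · intro _; exact ⟨-1, by ring⟩
  · rcases Nat.even_or_odd n with hev | hodd
    · -- EVEN case, n ≥ 2
      have hZex : ∀ k : ℕ, ∃ z : ℤ, (k < n →
          ((z:ℚ) = gg k ∧ (Odd z ↔ (k = 1 ∨ (Even k ∧ 2 ≤ k))))) := by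
        intro k
        by_cases h : k < n
        · obtain ⟨z, hz⟩ := ih k h
          exact ⟨z, fun _ => hz⟩
        · exact ⟨0, fun hk => absurd hk h⟩
      choose Z hZ using hZex
      set S : ℤ := ∑ k ∈ range n, (n.choose k : ℤ) * Z k with hS
      have hSq : (S:ℚ) = ∑ k ∈ range n, (n.choose k:ℚ) * gg k := by
        rw [hS]
        push_cast
        apply Finset.sum_congr rfl
        intro k hk
        rw [mem_range] at hk
        rw [(hZ k hk).1]
      have hI1 := I1 n (by omega)
      rw [Finset.sum_range_succ, Nat.choose_self] at hI1
      have hggn : 2 * gg n = -(2*(n:ℚ)) - (S:ℚ) := by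
        rw [hSq]
        push_cast at hI1 ⊢
        linarith [hI1]
      -- parity of S
      have hS2 : (S : ZMod 2) = 0 := by
        have hcast : (S : ZMod 2) = ∑ k ∈ range n, (n.choose k : ZMod 2) * ((Z k : ZMod 2)) := by
          rw [hS]; push_cast; rfl
        have hform : ∀ k ∈ range n, (n.choose k : ZMod 2) * (Z k : ZMod 2)
            = (n.choose k : ZMod 2) * (1 + (k : ZMod 2))
              + (if k = 1 then (n.choose k : ZMod 2) else 0)
              + (if k = 0 then (n.choose k : ZMod 2) else 0) := by
          intro k hk
          rw [mem_range] at hk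
          have hpar := (hZ k hk).2
          rcases Nat.eq_zero_or_pos k with rfl | hk1
          · have : ¬ Odd (Z 0) := by rw [hpar]; rintro (h|⟨_,h⟩) <;> omega
            rw [zmod_even (Int.not_odd_iff_even.mp this)]
            simp only [if_pos rfl, if_neg (by norm_num : (0:ℕ) ≠ 1), Nat.cast_zero]
            generalize (n.choose 0 : ZMod 2) = c
            revert c; decide
          · rcases Nat.eq_or_lt_of_le hk1 with h1 | hk2
            · -- k = 1
              have hk1' : k = 1 := h1.symm
              subst hk1'
              have : Odd (Z 1) := by rw [hpar]; left; rfl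
              rw [zmod_odd this]
              simp only [if_pos rfl, if_neg (by norm_num : (1:ℕ) ≠ 0), Nat.cast_one]
              generalize (n.choose 1 : ZMod 2) = c
              revert c; decide
            · -- k ≥ 2
              have hkne1 : k ≠ 1 := by omega
              have hkne0 : k ≠ 0 := by omega
              rw [if_neg hkne1, if_neg hkne0, add_zero, add_zero]
              rcases Nat.even_or_odd k with hke | hko
              · have : Odd (Z k) := by rw [hpar]; right; exact ⟨hke, by omega⟩
                rw [zmod_odd this, natcast_zmod_even hke]
                ring
              · have : ¬ Odd (Z k) := by
                  rw [hpar]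
                  rintro (h | ⟨h, _⟩)
                  · omega
                  · exact (Nat.not_even_iff_odd.mpr hko) h
                rw [zmod_even (Int.not_odd_iff_even.mp this), natcast_zmod_odd hko]
                generalize (n.choose k : ZMod 2) = c
                revert c; decide
        rw [hcast, Finset.sum_congr rfl hform]
        rw [Finset.sum_add_distrib, Finset.sum_add_distrib]
        have e1 : ∑ k ∈ range n, (if k = 1 then (n.choose k : ZMod 2) else 0)
            = (n : ZMod 2) := by
          rw [Finset.sum_ite_eq' (range n) 1 (fun k => (n.choose k : ZMod 2))]
          rw [if_pos (mem_range.mpr (by omega))]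
          simp [Nat.choose_one_right]
        have e0 : ∑ k ∈ range n, (if k = 0 then (n.choose k : ZMod 2) else 0)
            = 1 := by
          rw [Finset.sum_ite_eq' (range n) 0 (fun k => (n.choose k : ZMod 2))]
          rw [if_pos (mem_range.mpr (by omega))]
          simp
        have emain : ∑ k ∈ range n, (n.choose k : ZMod 2) * (1 + (k : ZMod 2)) = 1 := by
          have hnat : ∑ k ∈ range (n+1), (n.choose k) * (1 + k) = 2^n + n * 2^(n-1) := by
            have : ∀ k ∈ range (n+1), (n.choose k) * (1 + k) = n.choose k + k * n.choose k := by
              intro k _; ring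
            rw [Finset.sum_congr rfl this, Finset.sum_add_distrib, Nat.sum_range_choose]
            obtain ⟨m, hm⟩ : ∃ m, n = m + 1 := ⟨n - 1, by omega⟩
            subst hm
            rw [sum_kchoose m]
            simp
          have htot : ∑ k ∈ range (n+1), (n.choose k : ZMod 2) * (1 + (k : ZMod 2)) = 0 := by
            have := congrArg (fun m : ℕ => (m : ZMod 2)) hnat
            push_cast at this
            rw [this]
            have he : Even (2^n + n * 2^(n-1) : ℕ) := by
              apply Even.add
              · exact (Nat.even_pow.mpr ⟨even_iff_two_dvd.mpr (by norm_num), by omega⟩)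
              · exact hev.mul_right _
            have := natcast_zmod_even he
            push_cast at this
            convert this using 2 <;> push_cast <;> ring
          rw [Finset.sum_range_succ] at htot
          have hn0 : ((n:ℕ) : ZMod 2) = 0 := natcast_zmod_even hev
          rw [Nat.choose_self, hn0] at htot
          norm_num at htot
          -- htot : Σ_{range n} ... + 1 = 0
          have : ∀ a : ZMod 2, a + 1 = 0 → a = 1 := by decide
          exact this _ htot
        rw [e1, e0, emain, natcast_zmod_even hev]
        decide
      have hSeven : Even S := even_of_zmod hS2
      obtain ⟨s, hs⟩ := hSeven
      refine ⟨-(n:ℤ) - s, ?_, ?_⟩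
      · have hSs : (S:ℚ) = 2*(s:ℚ) := by rw [hs]; push_cast; ring
        push_cast
        linarith [hggn, hSs]
      · -- parity: z is odd
        set z : ℤ := -(n:ℤ) - s with hz
        have hzq : (z:ℚ) = gg n := by
          have hSs : (S:ℚ) = 2*(s:ℚ) := by rw [hs]; push_cast; ring
          rw [hz]; push_cast; linarith [hggn, hSs]
        have hzodd : Odd z := by
          -- identities at N = n+1
          have hI1N := I1 (n+1) (by omega)
          have hI3N := I3 (n+1) (by omega)
          have hsub : ∑ k ∈ range (n+1), ((n+1).choose k : ℚ) * gg k * (3^(n+1-k) - 1)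
              = -(2*((n:ℚ)+1)*(3^n - 2^n)) := by
            have hsplit : ∑ k ∈ range (n+2), ((n+1).choose k : ℚ) * gg k * (3^(n+1-k) - 1)
                = (∑ k ∈ range (n+2), ((n+1).choose k : ℚ) * gg k * 3^(n+1-k))
                  - ∑ k ∈ range (n+2), ((n+1).choose k : ℚ) * gg k := by
              rw [← Finset.sum_sub_distrib]
              apply Finset.sum_congr rfl
              intros; ring
            rw [Finset.sum_range_succ] at hsplit
            have htop : ((n+1).choose (n+1) : ℚ) * gg (n+1) * (3^(n+1-(n+1)) - 1) = 0 := by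
              rw [Nat.sub_self]; norm_num
            rw [htop, add_zero] at hsplit
            rw [hsplit]
            simp only [Nat.add_sub_cancel] at hI1N hI3N
            push_cast at hI1N hI3N ⊢
            linarith [hI1N, hI3N]
          -- integer version
          set Z' : ℕ → ℤ := fun k => if k = n then z else Z k with hZ'
          have hZ'q : ∀ k < n + 1, ((Z' k : ℤ) : ℚ) = gg k := by
            intro k hk
            rw [hZ']
            by_cases h : k = n
            · subst h; simp [hzq]
            · have hkn : k < n := by omega
              simp only [if_neg h]
              exact (hZ k hkn).1
          set T : ℤ := ∑ k ∈ range (n+1), ((n+1).choose k : ℤ) * Z' k *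
            (∑ i ∈ range (n+1-k), 3^i) with hT
          have hTq : ((2 * T : ℤ) : ℚ) = -(2*((n:ℚ)+1)*(3^n - 2^n)) := by
            rw [← hsub, hT]
            push_cast
            rw [Finset.mul_sum]
            apply Finset.sum_congr rfl
            intro k hk
            rw [mem_range] at hk
            rw [hZ'q k hk]
            have := hgeoQ (n+1-k)
            push_cast at this
            linear_combination (-(((n+1).choose k : ℚ) * gg k)) * this
          have hTint : T = -((n:ℤ)+1) * (3^n - 2^n) := by
            have h2 : ((2 * T : ℤ) : ℚ) = ((2 * (-((n:ℤ)+1) * (3^n - 2^n)) : ℤ) : ℚ) := by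
              rw [hTq]; push_cast; ring
            have := Int.cast_injective (α := ℚ) h2
            omega
          -- now mod 2
          have hTz : (T : ZMod 2) = (z : ZMod 2) := by
            rw [hT]
            push_cast
            have hterm : ∀ k ∈ range (n+1),
                ((n+1).choose k : ZMod 2) * (Z' k : ZMod 2) * (∑ i ∈ range (n+1-k), (3:ZMod 2)^i)
                  = (n.choose k : ZMod 2) * (Z' k : ZMod 2) := by
              intro k hk
              rw [mem_range] at hk
              have hgs : (∑ i ∈ range (n+1-k), (3:ZMod 2)^i) = ((n+1-k : ℕ) : ZMod 2) := by
                have : ∀ i ∈ range (n+1-k), (3:ZMod 2)^i = 1 := by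
                  intro i _
                  rw [show ((3:ZMod 2)) = 1 by decide, one_pow]
                rw [Finset.sum_congr rfl this]
                simp
              rw [hgs]
              have hcs : ((n+1-k : ℕ) : ZMod 2) * ((n+1).choose k : ZMod 2)
                  = ((n+1 : ℕ) : ZMod 2) * (n.choose k : ZMod 2) := by
                have := congrArg (fun m : ℕ => (m : ZMod 2)) (choose_mul_sub n k (by omega))
                push_cast at this
                convert this using 1 <;> push_cast <;> ring
              have hN1 : ((n+1 : ℕ) : ZMod 2) = 1 := by
                apply natcast_zmod_odd
                exact Even.add_one hev
              linear_combination ((Z' k : ZMod 2)) * hcs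
                + ((n.choose k : ZMod 2) * (Z' k : ZMod 2)) * hN1
            rw [Finset.sum_congr rfl hterm, Finset.sum_range_succ]
            have hzn : (Z' n : ZMod 2) = (z : ZMod 2) := by rw [hZ']; simp
            have hrest : ∑ k ∈ range n, (n.choose k : ZMod 2) * (Z' k : ZMod 2) = 0 := by
              have hstep : ∀ k ∈ range n, (n.choose k : ZMod 2) * (Z' k : ZMod 2)
                  = (n.choose k : ZMod 2) * (Z k : ZMod 2) := by
                intro k hk
                rw [mem_range] at hk
                rw [hZ']
                simp only [if_neg (by omega : k ≠ n)]
              rw [Finset.sum_congr rfl hstep]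
              calc ∑ k ∈ range n, (n.choose k : ZMod 2) * (Z k : ZMod 2)
                  = ((S : ℤ) : ZMod 2) := by rw [hS]; push_cast; rfl
                _ = 0 := hS2
            rw [hrest, hzn, Nat.choose_self]
            push_cast
            ring
          have hz1 : (z : ZMod 2) = 1 := by
            rw [← hTz, hTint]
            push_cast
            rw [show ((3:ZMod 2)) = 1 by decide, show ((2:ZMod 2)) = 0 by decide]
            rw [one_pow, zero_pow (by omega : n ≠ 0)]
            rw [natcast_zmod_even hev]
            decide
          exact odd_of_zmod hz1
        constructor
        · intro _; right; exact ⟨hev, hn2⟩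
        · intro _; exact hzodd
    · -- ODD case, n ≥ 2 (so n ≥ 3)
      refine ⟨0, ?_, ?_⟩
      · rw [gg_odd hodd (by omega)]; norm_num
      · constructor
        · intro h; exact absurd h (by decide)
        · rintro (h | ⟨h, _⟩)
          · omega
          · exact absurd h (Nat.not_even_iff_odd.mpr hodd)

/-- The Genocchi number `G_n = 2·(1 - 2^n)·B_n(1)` is an integer for every `n ≥ 0`,
where `B_n(1)` is the `n`-th Bernoulli number (with `B_1(1) = 1/2`). -/
theorem genocchi_number_is_integer (n : ℕ) :
    ∃ g : ℤ, (g : ℚ) = 2 * (1 - 2 ^ n) * (Polynomial.bernoulli n).eval 1 := by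
  obtain ⟨z, hz, -⟩ := gg_int n
  exact ⟨z, by rw [hz, gg, Bv]⟩
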